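/- Let G = (V, E, ℓ) be a labeled graph with n vertices and let k ≥ 2. Then for every t ≥ 1 there exist real scalars α_1,…,α_k, β_1,…,β_k, a function g^{(0)} : V^k → ℝ with g^{(0)}(u) = g^{(0)}(v) if and only if C^{δ,k}_0(u) = C^{δ,k}_0(v), and functions f_1,…,f_t : ℝ → ℝ such that, defining recursively g^{(s)}(u) = f_s( g^{(s−1)}(u) + ∑_{j=1}^k ( α_j · ∑_{w ∈ N(u_j)} g^{(s−1)}(φ_j(u, w)) + β_j · ∑_{w ∈ V ∖ N(u_j)} g^{(s−1)}(φ_j(u, w)) ) ) for 1 ≤ s ≤ t, it holds for all s ≤ t and all u, v ∈ V^k that C^{δ,k}_s(u) = C^{δ,k}_s(v) if and only if g^{(s)}(u) = g^{(s)}(v). -/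

import Mathlib

namespace Stmt14Aux
open Finset

/-- base-B digit uniqueness -/
lemma digitsUnique (B : ℕ) : ∀ (m : ℕ) (d e : ℕ → ℕ), (∀ p, d p < B) → (∀ p, e p < B) →
    (∑ p ∈ range m, d p * B ^ p = ∑ p ∈ range m, e p * B ^ p) →
    ∀ p < m, d p = e p := by
  intro m
  induction m with
  | zero => intro d e _ _ _ p hp; omega
  | succ m ih =>
    intro d e hd he h
    have hB : 0 < B := lt_of_le_of_lt (Nat.zero_le _) (hd 0)
    rw [Finset.sum_range_succ', Finset.sum_range_succ'] at h
    have h' : (∑ p ∈ range m, d (p+1) * B ^ p) * B + d 0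
        = (∑ p ∈ range m, e (p+1) * B ^ p) * B + e 0 := by
      rw [Finset.sum_mul, Finset.sum_mul]
      simpa [pow_succ, mul_assoc, mul_comm] using h
    have h0 : d 0 = e 0 := by
      have h1 : ((∑ p ∈ range m, d (p+1) * B ^ p) * B + d 0) % B = d 0 := by
        rw [Nat.mul_add_mod', Nat.mod_eq_of_lt (hd 0)]
      have h2 : ((∑ p ∈ range m, e (p+1) * B ^ p) * B + e 0) % B = e 0 := by
        rw [Nat.mul_add_mod', Nat.mod_eq_of_lt (he 0)]
      rw [← h1, h', h2]
    have h3 : (∑ p ∈ range m, d (p+1) * B ^ p) * B = (∑ p ∈ range m, e (p+1) * B ^ p) * B := by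
      omega
    have h4 : (∑ p ∈ range m, d (p+1) * B ^ p) = (∑ p ∈ range m, e (p+1) * B ^ p) :=
      Nat.eq_of_mul_eq_mul_right hB h3
    have h5 := ih (fun p => d (p+1)) (fun p => e (p+1)) (fun p => hd _) (fun p => he _) h4
    intro p hp
    cases p with
    | zero => exact h0
    | succ p => exact h5 p (by omega)

lemma sumPowFiber {ι : Type*} [DecidableEq ι] (B P : ℕ) (I : Finset ι) (a : ι → ℕ)
    (ha : ∀ i ∈ I, a i < P) :
    ∑ i ∈ I, B ^ a i = ∑ p ∈ range P, (I.filter fun i => a i = p).card * B ^ p := by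
  rw [← Finset.sum_fiberwise_of_maps_to (g := a) (fun i hi => mem_range.mpr (ha i hi))
    (fun i => B ^ a i)]
  refine Finset.sum_congr rfl fun p hp => ?_
  rw [Finset.sum_congr rfl (fun i hi => by rw [(mem_filter.mp hi).2]),
      Finset.sum_const, smul_eq_mul]






def colS (C : ℕ → (Fin k → Fin n) → ℕ) (s : ℕ) : Finset ℕ :=
  Finset.univ.image (C s)

def rho (C : ℕ → (Fin k → Fin n) → ℕ) (s c : ℕ) : ℕ :=
  ((colS C s).filter (· < c)).card

def rk (C : ℕ → (Fin k → Fin n) → ℕ) (s : ℕ) (u : Fin k → Fin n) : ℕ :=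
  rho C s (C s u)

lemma C_mem_colS (C : ℕ → (Fin k → Fin n) → ℕ) (s : ℕ) (u : Fin k → Fin n) :
    C s u ∈ colS C s := Finset.mem_image_of_mem _ (mem_univ u)

lemma rho_lt_card {C : ℕ → (Fin k → Fin n) → ℕ} {s c : ℕ} (hc : c ∈ colS C s) :
    rho C s c < (colS C s).card := by
  apply Finset.card_lt_card
  refine (Finset.ssubset_iff_of_subset (Finset.filter_subset _ _)).mpr ⟨c, hc, by simp⟩

lemma colS_card_le (C : ℕ → (Fin k → Fin n) → ℕ) (s : ℕ) :
    (colS C s).card ≤ n ^ k := by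
  calc (colS C s).card ≤ (Finset.univ : Finset (Fin k → Fin n)).card := Finset.card_image_le
    _ = n ^ k := by simp [Finset.card_univ, Fintype.card_fun]

lemma rho_lt {C : ℕ → (Fin k → Fin n) → ℕ} {s c : ℕ} (hc : c ∈ colS C s) :
    rho C s c < n ^ k := lt_of_lt_of_le (rho_lt_card hc) (colS_card_le C s)

lemma rk_lt (C : ℕ → (Fin k → Fin n) → ℕ) (s : ℕ) (u : Fin k → Fin n) :
    rk C s u < n ^ k := rho_lt (C_mem_colS C s u)

lemma rho_mono {C : ℕ → (Fin k → Fin n) → ℕ} {s c c' : ℕ} (hc : c ∈ colS C s)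
    (h : c < c') : rho C s c < rho C s c' := by
  apply Finset.card_lt_card
  have hsub : (colS C s).filter (· < c) ⊆ (colS C s).filter (· < c') :=
    Finset.monotone_filter_right _ (fun x _ (hx : x < c) => by omega)
  exact (Finset.ssubset_iff_of_subset hsub).mpr
    ⟨c, Finset.mem_filter.mpr ⟨hc, h⟩, by simp⟩

lemma rho_inj {C : ℕ → (Fin k → Fin n) → ℕ} {s c c' : ℕ} (hc : c ∈ colS C s)
    (hc' : c' ∈ colS C s) (h : rho C s c = rho C s c') : c = c' := by
  rcases Nat.lt_trichotomy c c' with h1 | h1 | h1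
  · exact absurd (rho_mono hc h1) (by omega)
  · exact h1
  · exact absurd (rho_mono hc' h1) (by omega)

lemma rk_iff (C : ℕ → (Fin k → Fin n) → ℕ) (s : ℕ) (u v : Fin k → Fin n) :
    rk C s u = rk C s v ↔ C s u = C s v := by
  constructor
  · exact fun h => rho_inj (C_mem_colS C s u) (C_mem_colS C s v) h
  · intro h; rw [rk, rk, h]


variable (G : SimpleGraph (Fin n)) [DecidableRel G.Adj]

def pos (C : ℕ → (Fin k → Fin n) → ℕ) (s : ℕ) (u : Fin k → Fin n) :
    Unit ⊕ Fin k × Fin n → ℕ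
  | Sum.inl _ => rk C s u
  | Sum.inr (j, w) =>
      n ^ k * (2 * (j : ℕ) + if G.Adj (u j) w then 1 else 2) + rk C s (Function.update u j w)

def HN (C : ℕ → (Fin k → Fin n) → ℕ) (s : ℕ) (u : Fin k → Fin n) : ℕ :=
  ∑ i : Unit ⊕ Fin k × Fin n, (n + 2) ^ pos G C s u i

def Dg (C : ℕ → (Fin k → Fin n) → ℕ) (s : ℕ) (u : Fin k → Fin n) (p : ℕ) : ℕ :=
  (Finset.univ.filter fun i => pos G C s u i = p).card

lemma HN_split (C : ℕ → (Fin k → Fin n) → ℕ) (s : ℕ) (u : Fin k → Fin n) :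
    HN G C s u = (n + 2) ^ rk C s u + ∑ j : Fin k,
      ((∑ w ∈ G.neighborFinset (u j),
          (n + 2) ^ (n ^ k * (2 * (j : ℕ) + 1)) * (n + 2) ^ rk C s (Function.update u j w)) +
       (∑ w ∈ (G.neighborFinset (u j))ᶜ,
          (n + 2) ^ (n ^ k * (2 * (j : ℕ) + 2)) * (n + 2) ^ rk C s (Function.update u j w))) := by
  rw [HN, Fintype.sum_sum_type, Fintype.sum_prod_type]
  have h1 : ∑ a : Unit, (n + 2) ^ pos G C s u (Sum.inl a) = (n + 2) ^ rk C s u := by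
    simp [pos]
  rw [h1]
  congr 1
  refine Finset.sum_congr rfl fun j _ => ?_
  rw [← Finset.sum_add_sum_compl (G.neighborFinset (u j))]
  congr 1
  · refine Finset.sum_congr rfl fun w hw => ?_
    rw [SimpleGraph.mem_neighborFinset] at hw
    simp [pos, hw, pow_add]
  · refine Finset.sum_congr rfl fun w hw => ?_
    rw [Finset.mem_compl, SimpleGraph.mem_neighborFinset] at hw
    simp [pos, hw, pow_add]



lemma decode {a b r1 r2 : ℕ} (hM : 0 < n ^ k) (h1 : r1 < n ^ k) (h2 : r2 < n ^ k)
    (h : n ^ k * a + r1 = n ^ k * b + r2) : a = b ∧ r1 = r2 := by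
  have ha : (n ^ k * a + r1) / (n ^ k) = a := by
    rw [Nat.mul_add_div hM, Nat.div_eq_of_lt h1]; omega
  have hb : (n ^ k * b + r2) / (n ^ k) = b := by
    rw [Nat.mul_add_div hM, Nat.div_eq_of_lt h2]; omega

  have hab : a = b := by rw [← ha, ← hb, h]
  subst hab
  exact ⟨rfl, Nat.add_left_cancel h⟩

lemma pos_lt (C : ℕ → (Fin k → Fin n) → ℕ) (s : ℕ) (u : Fin k → Fin n)
    (i : Unit ⊕ Fin k × Fin n) : pos G C s u i < n ^ k * (2 * k + 1) := by
  match i with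
  | Sum.inl _ =>
    simp only [pos]
    have h1 : rk C s u < n ^ k := rk_lt C s u
    have h2 : n ^ k ≤ n ^ k * (2 * k + 1) := Nat.le_mul_of_pos_right _ (by omega)
    omega
  | Sum.inr (j, w) =>
    simp only [pos]
    have hj : (j : ℕ) < k := j.isLt
    have h1 : rk C s (Function.update u j w) < n ^ k := rk_lt C s _
    have he : (if G.Adj (u j) w then 1 else 2) ≤ 2 := by split <;> omega
    have h3 : n ^ k * (2 * (j : ℕ) + if G.Adj (u j) w then 1 else 2) + n ^ k
        ≤ n ^ k * (2 * k + 1) := by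
      rw [← Nat.mul_succ]
      exact Nat.mul_le_mul_left _ (by omega)
    omega

lemma Dg_lt (C : ℕ → (Fin k → Fin n) → ℕ) (s : ℕ) (u : Fin k → Fin n) (p : ℕ) :
    Dg G C s u p < n + 2 := by
  have hM : 0 < n ^ k := lt_of_le_of_lt (Nat.zero_le _) (rk_lt C s u)
  have hcard : Dg G C s u p ≤ Fintype.card (Option (Fin n)) := by
    rw [Dg, ← Finset.card_univ]
    apply Finset.card_le_card_of_injOn
      (Sum.elim (fun _ => (none : Option (Fin n))) (fun q => some q.2))
      (fun _ _ => mem_univ _)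
    intro i1 h1 i2 h2 heq
    simp only [coe_filter, Set.mem_setOf_eq, mem_univ, true_and] at h1 h2
    match i1, i2 with
    | Sum.inl a, Sum.inl b => rfl
    | Sum.inl a, Sum.inr q => simp at heq
    | Sum.inr q, Sum.inl a => simp at heq
    | Sum.inr (j, w), Sum.inr (j', w') =>
      simp only [Sum.elim_inr, Option.some.injEq] at heq
      have hw : w = w' := heq
      subst hw
      simp only [pos] at h1 h2
      obtain ⟨hab, -⟩ := decode hM (rk_lt C s _) (rk_lt C s _) (h1.trans h2.symm)
      have he1 : (if G.Adj (u j) w then 1 else 2) = 1 ∨ (if G.Adj (u j) w then 1 else 2) = 2 := by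
        split <;> simp
      have he2 : (if G.Adj (u j') w then 1 else 2) = 1 ∨ (if G.Adj (u j') w then 1 else 2) = 2 := by
        split <;> simp
      have hj : (j : ℕ) = (j' : ℕ) := by
        rcases he1 with h | h <;> rcases he2 with h' | h' <;> rw [h, h'] at hab <;> omega
      have : j = j' := Fin.ext hj
      rw [this]
  simp only [Fintype.card_option, Fintype.card_fin] at hcard
  omega

lemma HN_digits (C : ℕ → (Fin k → Fin n) → ℕ) (s : ℕ) (u : Fin k → Fin n) :
    HN G C s u = ∑ p ∈ range (n ^ k * (2 * k + 1)), Dg G C s u p * (n + 2) ^ p := by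
  rw [HN, sumPowFiber (n + 2) (n ^ k * (2 * k + 1)) Finset.univ (pos G C s u)
    (fun i _ => pos_lt G C s u i)]
  rfl

lemma digits_eq (C : ℕ → (Fin k → Fin n) → ℕ) (s : ℕ) (u v : Fin k → Fin n)
    (hH : HN G C s u = HN G C s v) :
    ∀ p < n ^ k * (2 * k + 1), Dg G C s u p = Dg G C s v p := by
  apply digitsUnique (n + 2) _ _ _ (fun p => Dg_lt G C s u p) (fun p => Dg_lt G C s v p)
  rw [← HN_digits, ← HN_digits, hH]

lemma fiber_card (C : ℕ → (Fin k → Fin n) → ℕ) (s : ℕ) (x : Fin k → Fin n) (j : Fin k)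
    (c e : ℕ) (hc : c ∈ colS C s) (he : e = 1 ∨ e = 2) :
    (Finset.univ.filter fun w : Fin n =>
        C s (Function.update x j w) = c ∧ (if G.Adj (x j) w then 1 else 2) = e).card
      = Dg G C s x (n ^ k * (2 * (j : ℕ) + e) + rho C s c) := by
  have hM : 0 < n ^ k := lt_of_le_of_lt (Nat.zero_le _) (rk_lt C s x)
  rw [Dg]
  apply Finset.card_bij (fun w _ => Sum.inr (j, w))
  · intro w hw
    simp only [mem_filter, mem_univ, true_and] at hw ⊢
    show pos G C s x (Sum.inr (j, w)) = _
    simp only [pos]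
    rw [hw.2, rk, hw.1]
  · intro w1 h1 w2 h2 hi
    simpa using hi
  · intro i hi
    simp only [mem_filter, mem_univ, true_and] at hi
    match i with
    | Sum.inl a =>
      exfalso
      have h1 : rk C s x < n ^ k := rk_lt C s x
      have h2 : n ^ k ≤ n ^ k * (2 * (j : ℕ) + e) := Nat.le_mul_of_pos_right _ (by omega)
      simp only [pos] at hi
      omega
    | Sum.inr (j', w') =>
      simp only [pos] at hi
      obtain ⟨hab, hr⟩ := decode hM (rk_lt C s _) (rho_lt hc) hi
      have he' : (if G.Adj (x j') w' then 1 else 2) = 1 ∨ (if G.Adj (x j') w' then 1 else 2) = 2 := by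
        split <;> simp
      have hjj' : (j' : ℕ) = (j : ℕ) := by
        rcases he' with h | h <;> rcases he with h1 | h1 <;> rw [h, h1] at hab <;> omega
      have hj : j' = j := Fin.ext hjj'
      subst hj
      have hee : (if G.Adj (x j') w' then 1 else 2) = e := by
        rcases he' with h | h <;> rcases he with h1 | h1 <;> omega
      refine ⟨w', ?_, rfl⟩
      simp only [mem_filter, mem_univ, true_and]
      exact ⟨rho_inj (C_mem_colS C s _) hc hr, hee⟩

lemma block_lt {j : Fin k} {e rr : ℕ} (he : e ≤ 2) (hrr : rr < n ^ k) :
    n ^ k * (2 * (j : ℕ) + e) + rr < n ^ k * (2 * k + 1) := by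
  have hj : (j : ℕ) < k := j.isLt
  have h1 : n ^ k * (2 * (j : ℕ) + e) + n ^ k = n ^ k * (2 * (j : ℕ) + e + 1) :=
    (Nat.mul_succ _ _).symm
  have h2 : n ^ k * (2 * (j : ℕ) + e + 1) ≤ n ^ k * (2 * k + 1) :=
    Nat.mul_le_mul_left _ (by omega)
  omega

lemma keyA (C : ℕ → (Fin k → Fin n) → ℕ)
    (hCt : ∀ t u v, C (t + 1) u = C (t + 1) v ↔
      (C t u = C t v ∧ ∀ j : Fin k,
        (Finset.univ.val.map fun w : Fin n =>
            (C t (Function.update u j w), if G.Adj (u j) w then (1 : ℕ) else 0)) =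
          (Finset.univ.val.map fun w : Fin n =>
            (C t (Function.update v j w), if G.Adj (v j) w then (1 : ℕ) else 0))))
    (s : ℕ) (u v : Fin k → Fin n) (hH : HN G C s u = HN G C s v) :
    C (s + 1) u = C (s + 1) v := by
  classical
  have hM : 0 < n ^ k := lt_of_le_of_lt (Nat.zero_le _) (rk_lt C s u)
  have hdig := digits_eq G C s u v hH
  -- Step 1: previous colors agree
  have hCs : C s u = C s v := by
    have hplt : rk C s u < n ^ k * (2 * k + 1) :=
      lt_of_lt_of_le (rk_lt C s u) (Nat.le_mul_of_pos_right _ (by omega))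
    have h1 : Dg G C s u (rk C s u) ≠ 0 := by
      rw [Dg]
      have hmem : Sum.inl () ∈ Finset.univ.filter
          (fun i => pos G C s u i = rk C s u) := by
        exact Finset.mem_filter.mpr ⟨Finset.mem_univ _, rfl⟩
      intro h0
      rw [Finset.card_eq_zero] at h0
      rw [h0] at hmem
      simp at hmem
    have h2 : Dg G C s v (rk C s u) ≠ 0 := by
      rw [← hdig _ hplt]; exact h1
    rw [Dg] at h2
    obtain ⟨i, hi⟩ := Finset.card_ne_zero.mp h2
    simp only [mem_filter, mem_univ, true_and] at hi
    match i with
    | Sum.inl a =>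
      simp only [pos] at hi
      exact (rk_iff C s u v).mp hi.symm
    | Sum.inr (j, w) =>
      exfalso
      simp only [pos] at hi
      have hrlt : rk C s u < n ^ k := rk_lt C s u
      have he : 1 ≤ (if G.Adj (v j) w then 1 else 2) := by split <;> omega
      have h3 : n ^ k ≤ n ^ k * (2 * (j : ℕ) + if G.Adj (v j) w then 1 else 2) :=
        Nat.le_mul_of_pos_right _ (by omega)
      omega
  -- Step 2: multisets agree
  refine (hCt s u v).mpr ⟨hCs, fun j => ?_⟩
  refine Multiset.ext.mpr fun x => ?_
  obtain ⟨c, b⟩ := x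
  rw [Multiset.count_map, Multiset.count_map]
  have mcard : ∀ (p : Fin n → Prop) [DecidablePred p],
      Multiset.card (Multiset.filter p Finset.univ.val) = (Finset.univ.filter p).card :=
    fun _ _ => rfl
  rw [mcard, mcard]
  by_cases hb : b = 1 ∨ b = 0
  · by_cases hc : c ∈ colS C s
    · have e : ℕ := if b = 1 then 1 else 2
      have hpred : ∀ (y : Fin k → Fin n),
          (Finset.univ.filter fun w : Fin n => (c, b) =
            (C s (Function.update y j w), if G.Adj (y j) w then (1 : ℕ) else 0)) =
          (Finset.univ.filter fun w : Fin n =>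
            C s (Function.update y j w) = c ∧
              (if G.Adj (y j) w then (1 : ℕ) else 2) = if b = 1 then 1 else 2) := by
        intro y
        apply Finset.filter_congr
        intro w _
        by_cases hadj : G.Adj (y j) w <;>
          rcases hb with hb | hb <;>
            simp [hadj, hb, Prod.ext_iff, eq_comm]
      have heOK : (if b = 1 then (1:ℕ) else 2) = 1 ∨ (if b = 1 then (1:ℕ) else 2) = 2 := by
        split <;> simp
      have heLE : (if b = 1 then (1:ℕ) else 2) ≤ 2 := by split <;> omega
      rw [hpred u, hpred v, fiber_card G C s u j c _ hc heOK,
        fiber_card G C s v j c _ hc heOK,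
        hdig _ (block_lt heLE (rho_lt hc))]
    · have hzero : ∀ (y : Fin k → Fin n),
          (Finset.univ.filter fun w : Fin n => (c, b) =
            (C s (Function.update y j w), if G.Adj (y j) w then (1 : ℕ) else 0)).card = 0 := by
        intro y
        rw [Finset.card_eq_zero, Finset.filter_eq_empty_iff]
        intro w _ hcon
        simp only [Prod.mk.injEq] at hcon
        exact hc (hcon.1 ▸ C_mem_colS C s (Function.update y j w))
      rw [hzero u, hzero v]
  · have hzero : ∀ (y : Fin k → Fin n),
        (Finset.univ.filter fun w : Fin n => (c, b) =
          (C s (Function.update y j w), if G.Adj (y j) w then (1 : ℕ) else 0)).card = 0 := by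
      intro y
      rw [Finset.card_eq_zero, Finset.filter_eq_empty_iff]
      intro w _ hcon
      simp only [Prod.mk.injEq] at hcon
      have := hcon.2
      split at this <;> omega
    rw [hzero u, hzero v]

noncomputable def gfun (C : ℕ → (Fin k → Fin n) → ℕ) (s : ℕ) (u : Fin k → Fin n) : ℝ :=
  (((n + 2) ^ rk C s u : ℕ) : ℝ)

noncomputable def alphaF (n k : ℕ) (j : Fin k) : ℝ :=
  (((n + 2) ^ (n ^ k * (2 * (j : ℕ) + 1)) : ℕ) : ℝ)

noncomputable def betaF (n k : ℕ) (j : Fin k) : ℝ :=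
  (((n + 2) ^ (n ^ k * (2 * (j : ℕ) + 2)) : ℕ) : ℝ)

noncomputable def HR (C : ℕ → (Fin k → Fin n) → ℕ) (m : ℕ) (u : Fin k → Fin n) : ℝ :=
  gfun C m u + ∑ j : Fin k,
    (alphaF n k j * ∑ w ∈ G.neighborFinset (u j), gfun C m (Function.update u j w) +
     betaF n k j * ∑ w ∈ (G.neighborFinset (u j))ᶜ, gfun C m (Function.update u j w))

lemma HR_cast (C : ℕ → (Fin k → Fin n) → ℕ) (m : ℕ) (u : Fin k → Fin n) :
    HR G C m u = ((HN G C m u : ℕ) : ℝ) := by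
  rw [HR, HN_split]
  push_cast [gfun, alphaF, betaF]
  congr 1
  refine Finset.sum_congr rfl fun j _ => ?_
  rw [Finset.mul_sum, Finset.mul_sum]

lemma gfun_iff (C : ℕ → (Fin k → Fin n) → ℕ) (s : ℕ) (u v : Fin k → Fin n) :
    gfun C s u = gfun C s v ↔ C s u = C s v := by
  rw [gfun, gfun, Nat.cast_inj]
  constructor
  · intro h
    exact (rk_iff C s u v).mp (Nat.pow_right_injective (by omega) h)
  · intro h
    rw [(rk_iff C s u v).mpr h]

noncomputable def ffun (C : ℕ → (Fin k → Fin n) → ℕ) (s : ℕ) (x : ℝ) : ℝ :=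
  @dite ℝ (∃ u : Fin k → Fin n, HR G C (s - 1) u = x) (Classical.propDecidable _)
    (fun h => gfun C s h.choose) (fun _ => 0)

lemma ffun_spec (C : ℕ → (Fin k → Fin n) → ℕ)
    (hCt : ∀ t u v, C (t + 1) u = C (t + 1) v ↔
      (C t u = C t v ∧ ∀ j : Fin k,
        (Finset.univ.val.map fun w : Fin n =>
            (C t (Function.update u j w), if G.Adj (u j) w then (1 : ℕ) else 0)) =
          (Finset.univ.val.map fun w : Fin n =>
            (C t (Function.update v j w), if G.Adj (v j) w then (1 : ℕ) else 0))))
    (s : ℕ) (hs : 1 ≤ s) (u : Fin k → Fin n) :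
    ffun G C s (HR G C (s - 1) u) = gfun C s u := by
  have hex : ∃ w : Fin k → Fin n, HR G C (s - 1) w = HR G C (s - 1) u := ⟨u, rfl⟩
  rw [ffun, dif_pos hex]
  have hch : HR G C (s - 1) hex.choose = HR G C (s - 1) u := hex.choose_spec
  have hN : HN G C (s - 1) hex.choose = HN G C (s - 1) u := by
    have h1 : ((HN G C (s - 1) hex.choose : ℕ) : ℝ) = ((HN G C (s - 1) u : ℕ) : ℝ) := by
      rw [← HR_cast, ← HR_cast]; exact hch
    exact_mod_cast h1
  have hc := keyA G C hCt (s - 1) _ _ hN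
  rw [Nat.sub_add_cancel hs] at hc
  exact (gfun_iff C s _ u).mpr hc

end Stmt14Aux



/-- for every `t ≥ 1` there are scalars `α_j, β_j`, an initial encoding `g⁰`
consistent with the initial `δ`-`k`-WL colors, and relabeling functions `f_s` such that the
recursion `g^{(s)}(u) = f_s(g^{(s−1)}(u) + ∑_j (α_j ∑_{w ∈ N(u_j)} g^{(s−1)}(φ_j(u,w)) +
β_j ∑_{w ∉ N(u_j)} g^{(s−1)}(φ_j(u,w))))` produces encodings that coincide exactly when
the `δ`-`k`-WL colors coincide, for all `s ≤ t`. -/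
theorem stmt14 {n k : ℕ} (hk : 2 ≤ k) (G : SimpleGraph (Fin n)) [DecidableRel G.Adj]
    (ℓ : Fin n → ℕ)
    (C : ℕ → (Fin k → Fin n) → ℕ)
    (hC0 : ∀ u v, C 0 u = C 0 v ↔
      ((∀ i j, (u i = u j ↔ v i = v j) ∧ (G.Adj (u i) (u j) ↔ G.Adj (v i) (v j))) ∧
        ∀ i, ℓ (u i) = ℓ (v i)))
    (hCt : ∀ t u v, C (t + 1) u = C (t + 1) v ↔
      (C t u = C t v ∧ ∀ j : Fin k,
        (Finset.univ.val.map fun w : Fin n =>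
            (C t (Function.update u j w), if G.Adj (u j) w then (1 : ℕ) else 0)) =
          (Finset.univ.val.map fun w : Fin n =>
            (C t (Function.update v j w), if G.Adj (v j) w then (1 : ℕ) else 0)))) :
    ∀ t : ℕ, 1 ≤ t →
      ∃ (α β : Fin k → ℝ) (g : ℕ → (Fin k → Fin n) → ℝ) (f : ℕ → ℝ → ℝ),
        (∀ u v, g 0 u = g 0 v ↔ C 0 u = C 0 v) ∧
        (∀ s, 1 ≤ s → s ≤ t → ∀ u, g s u =
          f s (g (s - 1) u +
            ∑ j : Fin k,
              (α j * ∑ w ∈ G.neighborFinset (u j), g (s - 1) (Function.update u j w) +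
               β j * ∑ w ∈ (G.neighborFinset (u j))ᶜ, g (s - 1) (Function.update u j w)))) ∧
        (∀ s ≤ t, ∀ u v, C s u = C s v ↔ g s u = g s v) := by
  intro t ht
  refine ⟨Stmt14Aux.alphaF n k, Stmt14Aux.betaF n k, fun s u => Stmt14Aux.gfun C s u,
    fun s x => Stmt14Aux.ffun G C s x, ?_, ?_, ?_⟩
  · intro u v
    exact Stmt14Aux.gfun_iff C 0 u v
  · intro s hs1 _ u
    exact (Stmt14Aux.ffun_spec G C hCt s hs1 u).symm
  · intro s _ u v
    exact (Stmt14Aux.gfun_iff C s u v).symm
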